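/- arXiv:0807.0796 — 3 statements merged into one kernel-verified Lean document; each statement's English description precedes it below -/
import Mathlib

section
/- There exists a size pair (X, φ) and a homological 0-critical value w for (X, φ) such that w is not a discontinuity point for ℓ_{(X,φ)}(·, v) for any v > w, nor for ℓ_{(X,φ)}(u, ·) for any u < w. (For instance, X a vertical segment with infinitely many branches sprouting at heights 1 + 1/2^n, with φ the height function and w = 1.) -/
open Set

namespace Frosini

noncomputable def aa (k : ℕ) : ℝ := 1/2 - (1/2)^(k+1)
noncomputable def mm (k : ℕ) : ℝ := 1/2 - 3*(1/2)^(k+3)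
noncomputable def bump (k : ℕ) (t : ℝ) : ℝ := max 0 (13*(1/2)^(k+2) - 26*|t - mm k|)
noncomputable def f (t : ℝ) : ℝ := 2 - 2*t + ∑' k, bump k t

lemma bump_nonneg (k : ℕ) (t : ℝ) : 0 ≤ bump k t := le_max_left _ _

lemma bump_le (k : ℕ) (t : ℝ) : bump k t ≤ 13*(1/2)^(k+2) := by
  apply max_le
  · positivity
  · nlinarith [abs_nonneg (t - mm k)]

lemma bump_eq_zero {k : ℕ} {t : ℝ} (h : (1/2:ℝ)^(k+3) ≤ |t - mm k|) : bump k t = 0 := by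
  apply max_eq_left
  have h13 : (13:ℝ)*(1/2)^(k+2) = 26*(1/2)^(k+3) := by ring
  rw [h13]
  have := mul_le_mul_of_nonneg_left h (by norm_num : (0:ℝ) ≤ 26)
  linarith

lemma aa_lt_aa {j k : ℕ} (h : j < k) : aa j < aa k := by
  unfold aa
  have : (1/2:ℝ)^(k+1) < (1/2)^(j+1) :=
    pow_lt_pow_right_of_lt_one₀ (by norm_num) (by norm_num) (by omega)
  linarith

lemma aa_le_aa {j k : ℕ} (h : j ≤ k) : aa j ≤ aa k := by
  rcases eq_or_lt_of_le h with rfl | h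
  · exact le_refl _
  · exact (aa_lt_aa h).le

lemma mm_sub_aa (k : ℕ) : mm k - aa k = (1/2)^(k+3) := by
  unfold mm aa; ring

lemma aa_succ_sub_mm (k : ℕ) : aa (k+1) - mm k = (1/2)^(k+3) := by
  unfold mm aa; ring

lemma bump_eq_zero_left {k : ℕ} {t : ℝ} (h : t ≤ aa k) : bump k t = 0 := by
  apply bump_eq_zero
  have h1 := mm_sub_aa k
  have h2 := pow_pos (by norm_num : (0:ℝ) < 1/2) (k+3)
  have h3 : (0:ℝ) ≤ mm k - t := by linarith
  rw [abs_sub_comm, abs_of_nonneg h3]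
  linarith

lemma bump_eq_zero_right {k : ℕ} {t : ℝ} (h : aa (k+1) ≤ t) : bump k t = 0 := by
  apply bump_eq_zero
  have h1 := aa_succ_sub_mm k
  have h2 := pow_pos (by norm_num : (0:ℝ) < 1/2) (k+3)
  have h3 : (0:ℝ) ≤ t - mm k := by linarith
  rw [abs_of_nonneg h3]
  linarith

lemma summable_bound : Summable (fun k : ℕ => (13:ℝ)*(1/2)^(k+2)) := by
  apply Summable.mul_left
  have h := (summable_geometric_of_lt_one (by norm_num : (0:ℝ) ≤ 1/2)
    (by norm_num : (1/2:ℝ) < 1)).mul_left ((1/2:ℝ)^2)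
  exact h.congr (fun n => by rw [← pow_add]; ring_nf)

lemma continuous_f : Continuous f := by
  apply Continuous.add (by continuity)
  apply continuous_tsum (fun k => by unfold bump; fun_prop) summable_bound
  intro k x
  rw [Real.norm_eq_abs, abs_of_nonneg (bump_nonneg k x)]
  exact bump_le k x

lemma pow_half_pos (n : ℕ) : (0:ℝ) < (1/2)^n := by positivity

lemma aa_nonneg (k : ℕ) : 0 ≤ aa k := by
  have h0 : aa 0 = 0 := by unfold aa; norm_num
  rcases Nat.eq_zero_or_pos k with rfl | h
  · rw [h0]
  · rw [← h0]; exact (aa_lt_aa h).le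

lemma aa_lt_half (k : ℕ) : aa k < 1/2 := by
  unfold aa; have := pow_half_pos (k+1); linarith

lemma aa_lt_mm (k : ℕ) : aa k < mm k := by
  have := mm_sub_aa k; have := pow_half_pos (k+3); linarith

lemma mm_lt_aa_succ (k : ℕ) : mm k < aa (k+1) := by
  have := aa_succ_sub_mm k; have := pow_half_pos (k+3); linarith

lemma mm_lt_half (k : ℕ) : mm k < 1/2 := (mm_lt_aa_succ k).trans (aa_lt_half _)

lemma mm_nonneg (k : ℕ) : 0 ≤ mm k := (aa_nonneg k).trans (aa_lt_mm k).le

lemma f_of_half {t : ℝ} (h : 1/2 ≤ t) : f t = 2 - 2*t := by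
  unfold f
  rw [tsum_congr (fun k => bump_eq_zero_right (le_trans (aa_lt_half (k+1)).le h)), tsum_zero]
  ring

lemma f_one : f 1 = 0 := by
  rw [f_of_half (by norm_num)]; ring

lemma f_aa (j : ℕ) : f (aa j) = 1 + (1/2)^j := by
  unfold f
  have hz : ∀ k, bump k (aa j) = 0 := by
    intro k
    rcases le_or_gt j k with h | h
    · exact bump_eq_zero_left (aa_le_aa h)
    · exact bump_eq_zero_right (aa_le_aa h)
  rw [tsum_congr hz, tsum_zero]
  unfold aa; ring

lemma f_mm (j : ℕ) : f (mm j) = 1 + 4*(1/2)^j := by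
  unfold f
  have hz : ∀ k, k ≠ j → bump k (mm j) = 0 := by
    intro k hk
    rcases lt_or_gt_of_ne hk with h | h
    · exact bump_eq_zero_right (le_trans (aa_le_aa h) (aa_lt_mm j).le)
    · exact bump_eq_zero_left (le_trans (mm_lt_aa_succ j).le (aa_le_aa h))
  rw [tsum_eq_single j hz]
  have hb : bump j (mm j) = 13*(1/2)^(j+2) := by
    unfold bump
    rw [sub_self, abs_zero, mul_zero, sub_zero, max_eq_right (by positivity)]
  rw [hb]
  unfold mm; ring

lemma f_lower (t : ℝ) : 2 - 2*t ≤ f t := by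
  unfold f
  have : 0 ≤ ∑' k, bump k t := tsum_nonneg (fun k => bump_nonneg k t)
  linarith

lemma f_upper {t : ℝ} (h : t < 1/2) : f t ≤ 1 + 15*(1/2 - t) := by
  have hex : ∃ k, (1/2:ℝ)^(k+2) < 1/2 - t := by
    obtain ⟨n, hn⟩ := exists_pow_lt_of_lt_one (by linarith : (0:ℝ) < 1/2 - t)
      (by norm_num : (1/2:ℝ) < 1)
    exact ⟨n, lt_of_le_of_lt (pow_le_pow_of_le_one (by norm_num) (by norm_num) (by omega)) hn⟩
  set k₀ := Nat.find hex with hk₀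
  have hspec : (1/2:ℝ)^(k₀+2) < 1/2 - t := Nat.find_spec hex
  have hz : ∀ k, k ≠ k₀ → bump k t = 0 := by
    intro k hk
    rcases lt_or_gt_of_ne hk with hlt | hgt
    · have := Nat.find_min hex hlt
      push_neg at this
      exact bump_eq_zero_right (by unfold aa; linarith)
    · apply bump_eq_zero_left
      have h1 : t < aa (k₀+1) := by unfold aa; linarith
      exact le_trans h1.le (aa_le_aa hgt)
  unfold f
  rw [tsum_eq_single k₀ hz]
  have := bump_le k₀ t
  nlinarith

/-- Points of a sublevel subtype lying over a common interval on which `f ≤ v`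
are in the same connected component. -/
lemma comp_eq {v α β : ℝ} (h0 : 0 ≤ α) (hβ1 : β ≤ 1)
    (hf : ∀ s, α ≤ s → s ≤ β → f s ≤ v)
    (p q : ↥{x : ↥(Icc (0:ℝ) 1) | f x.1 ≤ v})
    (hp : p.1.1 ∈ Icc α β) (hq : q.1.1 ∈ Icc α β) :
    connectedComponent p = connectedComponent q := by
  set g : ↥{x : ↥(Icc (0:ℝ) 1) | f x.1 ≤ v} → ℝ := fun z => z.1.1 with hg
  have hind : Topology.IsInducing g :=
    Topology.IsInducing.subtypeVal.comp Topology.IsInducing.subtypeVal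
  set W : Set ↥{x : ↥(Icc (0:ℝ) 1) | f x.1 ≤ v} := g ⁻¹' (Icc α β) with hW
  have himg : g '' W = Icc α β := by
    rw [hW, Set.image_preimage_eq_inter_range]
    apply Set.inter_eq_self_of_subset_left
    intro s hs
    exact ⟨⟨⟨s, ⟨h0.trans hs.1, hs.2.trans hβ1⟩⟩, hf s hs.1 hs.2⟩, rfl⟩
  have hWconn : IsPreconnected W := by
    rw [← hind.isPreconnected_image, himg]
    exact isPreconnected_Icc
  have hsub : W ⊆ connectedComponent q := hWconn.subset_connectedComponent hq
  exact (connectedComponent_eq (hsub hp)).symm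

lemma cc_card_one {T : Type} [TopologicalSpace T] [PreconnectedSpace T] [Nonempty T] :
    Nat.card (ConnectedComponents T) = 1 := by
  rw [Nat.card_eq_one_iff_unique]
  refine ⟨⟨fun c d => ?_⟩, ⟨ConnectedComponents.mk (Classical.arbitrary T)⟩⟩
  obtain ⟨x, rfl⟩ := ConnectedComponents.surjective_coe c
  obtain ⟨y, rfl⟩ := ConnectedComponents.surjective_coe d
  rw [ConnectedComponents.coe_eq_coe, PreconnectedSpace.connectedComponent_eq_univ,
    PreconnectedSpace.connectedComponent_eq_univ]

lemma icc_lc : LocallyConnectedSpace ↥(Set.Icc (0:ℝ) 1) := by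
  rw [locallyConnectedSpace_iff_connected_subsets]
  intro x U hU
  rw [nhds_subtype_eq_comap] at hU
  obtain ⟨W, hW, hWU⟩ := hU
  obtain ⟨δ, hδ, hball⟩ := Metric.mem_nhds_iff.mp hW
  refine ⟨Subtype.val ⁻¹' Metric.ball (x:ℝ) δ, ?_, ?_, ?_⟩
  · rw [nhds_subtype_eq_comap]
    exact Filter.preimage_mem_comap (Metric.ball_mem_nhds _ hδ)
  · rw [← Topology.IsInducing.subtypeVal.isPreconnected_image, Subtype.image_preimage_coe,
      Real.ball_eq_Ioo]
    exact (Set.ordConnected_Icc.inter Set.ordConnected_Ioo).isPreconnected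
  · exact fun y hy => hWU (hball hy)

end Frosini

/-- The size function of a size pair: `sizeFun φ u v` is the number of connected
components of the sublevel set `X_v = {φ ≤ v}` containing at least one point of
`X_u = {φ ≤ u}`. -/
noncomputable def sizeFun {X : Type} [TopologicalSpace X] (φ : X → ℝ) (u v : ℝ) : ℕ :=
  Set.ncard {C : Set ↥{x : X | φ x ≤ v} |
    ∃ p : ↥{x : X | φ x ≤ v}, φ (p : X) ≤ u ∧ C = connectedComponent p}

/-- Remark 3.11: there exists a size pair `(X, φ)` and a real `w` which
is a homological 0-critical value (witnessed by the fact that the number of connected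
components of `X_{w-ε}` differs from that of `X_{w+ε}` for all sufficiently small
`ε > 0`), and yet `w` is not a discontinuity point of `ℓ(·,v)` for any `v > w`, nor of
`ℓ(u,·)` for any `u < w`. -/
theorem exists_critical_value_not_discontinuity :
    ∃ (X : Type) (_ : TopologicalSpace X) (_ : CompactSpace X) (_ : T2Space X)
      (_ : LocallyConnectedSpace X) (_ : Nonempty X) (φ : X → ℝ) (_ : Continuous φ)
      (w : ℝ),
      (∃ ε₀ > (0 : ℝ), ∀ ε : ℝ, 0 < ε → ε < ε₀ →
        Nat.card (ConnectedComponents ↥{x : X | φ x ≤ w - ε}) ≠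
          Nat.card (ConnectedComponents ↥{x : X | φ x ≤ w + ε})) ∧
      (∀ v > w, ContinuousAt (fun u : ℝ => (sizeFun φ u v : ℝ)) w) ∧
      (∀ u < w, ContinuousAt (fun v : ℝ => (sizeFun φ u v : ℝ)) w) := by
  classical
  open Frosini in
  refine ⟨↥(Set.Icc (0:ℝ) 1), inferInstance, inferInstance, inferInstance, Frosini.icc_lc,
    inferInstance, fun x => Frosini.f x.1, Frosini.continuous_f.comp continuous_subtype_val,
    1, ?_, ?_, ?_⟩
  · -- homological 0-critical value
    refine ⟨1, one_pos, ?_⟩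
    intro ε hε0 hε1
    -- left sublevel set is the interval [(1+ε)/2, 1]
    have himg : (Subtype.val '' {x : ↥(Icc (0:ℝ) 1) | Frosini.f x.1 ≤ 1 - ε})
        = Icc ((1+ε)/2) 1 := by
      ext t
      constructor
      · rintro ⟨⟨t, ht⟩, hft, rfl⟩
        simp only [mem_setOf_eq] at hft
        have ht2 : (1/2 : ℝ) ≤ t := by
          by_contra hc
          push_neg at hc
          have := Frosini.f_lower t
          linarith
        rw [Frosini.f_of_half ht2] at hft
        exact ⟨by linarith, ht.2⟩
      · intro ht
        have h2 : (1/2:ℝ) ≤ t := by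
          rcases ht with ⟨h1, _⟩; linarith
        refine ⟨⟨t, ⟨by linarith, ht.2⟩⟩, ?_, rfl⟩
        simp only [mem_setOf_eq]
        rw [Frosini.f_of_half h2]
        rcases ht with ⟨h1, _⟩
        linarith
    have hpre : IsPreconnected {x : ↥(Icc (0:ℝ) 1) | Frosini.f x.1 ≤ 1 - ε} := by
      rw [← Topology.IsInducing.subtypeVal.isPreconnected_image, himg]
      exact isPreconnected_Icc
    haveI : PreconnectedSpace ↥{x : ↥(Icc (0:ℝ) 1) | Frosini.f x.1 ≤ 1 - ε} :=
      Subtype.preconnectedSpace hpre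
    haveI : Nonempty ↥{x : ↥(Icc (0:ℝ) 1) | Frosini.f x.1 ≤ 1 - ε} := by
      refine ⟨⟨⟨1, by norm_num⟩, ?_⟩⟩
      simp only [mem_setOf_eq]
      rw [Frosini.f_one]
      linarith
    rw [Frosini.cc_card_one]
    -- right side has at least two components
    have hex : ∃ n, (1/2:ℝ)^(n+1) ≤ ε := by
      obtain ⟨n, hn⟩ := exists_pow_lt_of_lt_one hε0 (by norm_num : (1/2:ℝ) < 1)
      exact ⟨n, by
        calc (1/2:ℝ)^(n+1) ≤ (1/2)^n :=
          pow_le_pow_of_le_one (by norm_num) (by norm_num) (by omega)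
        _ ≤ ε := hn.le⟩
    set j := Nat.find hex with hj
    have hspec : (1/2:ℝ)^(j+1) ≤ ε := Nat.find_spec hex
    have hmin : ∀ i < j, ¬ ((1/2:ℝ)^(i+1) ≤ ε) := fun i hi => Nat.find_min hex hi
    have hjε : ε < (1/2:ℝ)^j := by
      rcases Nat.eq_zero_or_pos j with h0 | h0
      · rw [h0]; simpa using hε1
      · have := hmin (j-1) (by omega)
        push_neg at this
        have hj1 : j - 1 + 1 = j := by omega
        rwa [hj1] at this
    -- the two points
    have hmem_dip : Frosini.f (Frosini.aa (j+1)) ≤ 1 + ε := by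
      rw [Frosini.f_aa]; linarith
    have hdipIcc : Frosini.aa (j+1) ∈ Icc (0:ℝ) 1 :=
      ⟨Frosini.aa_nonneg _, by have := Frosini.aa_lt_half (j+1); linarith⟩
    set S := {x : ↥(Icc (0:ℝ) 1) | Frosini.f x.1 ≤ 1 + ε} with hS
    set pd : ↥S := ⟨⟨Frosini.aa (j+1), hdipIcc⟩, hmem_dip⟩ with hpd
    have h1Icc : (1:ℝ) ∈ Icc (0:ℝ) 1 := by norm_num
    set p1 : ↥S := ⟨⟨1, h1Icc⟩, by
      simp only [hS, mem_setOf_eq]; rw [Frosini.f_one]; linarith⟩ with hp1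
    -- peaks are above level 1+ε
    have hpeakj : 1 + ε < Frosini.f (Frosini.mm j) := by
      rw [Frosini.f_mm]; linarith
    have hpeakj1 : 1 + ε < Frosini.f (Frosini.mm (j+1)) := by
      rw [Frosini.f_mm]
      have : (1/2:ℝ)^(j+1) = (1/2)^j/2 := by ring
      nlinarith [Frosini.pow_half_pos j]
    set U : Set ↥S := {z : ↥S | z.1.1 ∈ Ioo (Frosini.mm j) (Frosini.mm (j+1))} with hU
    have hUopen : IsOpen U := by
      have : U = (fun z : ↥S => z.1.1) ⁻¹' (Ioo (Frosini.mm j) (Frosini.mm (j+1))) := rfl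
      rw [this]
      exact isOpen_Ioo.preimage (continuous_subtype_val.comp continuous_subtype_val)
    have hUclosed : IsClosed U := by
      have heq : U = (fun z : ↥S => z.1.1) ⁻¹' (Icc (Frosini.mm j) (Frosini.mm (j+1))) := by
        ext z
        simp only [hU, mem_setOf_eq, mem_preimage, mem_Ioo, mem_Icc]
        constructor
        · rintro ⟨h1, h2⟩; exact ⟨h1.le, h2.le⟩
        · rintro ⟨h1, h2⟩
          have hz := z.2
          simp only [hS, mem_setOf_eq] at hz
          constructor
          · rcases lt_or_eq_of_le h1 with h | h
            · exact h
            · exfalso; rw [← h] at hz; linarith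
          · rcases lt_or_eq_of_le h2 with h | h
            · exact h
            · exfalso; rw [h] at hz; linarith
      rw [heq]
      exact isClosed_Icc.preimage (continuous_subtype_val.comp continuous_subtype_val)
    have hpdU : pd ∈ U := by
      simp only [hU, mem_setOf_eq, mem_Ioo]
      exact ⟨by
        have h1 := Frosini.mm_lt_aa_succ j
        exact h1, Frosini.aa_lt_mm (j+1)⟩
    have hp1U : p1 ∉ U := by
      simp only [hU, mem_setOf_eq, mem_Ioo]
      push_neg
      intro _
      have := Frosini.mm_lt_half (j+1)
      norm_num; linarith
    have hne : (ConnectedComponents.mk pd) ≠ ConnectedComponents.mk p1 := by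
      intro h
      rw [ConnectedComponents.coe_eq_coe] at h
      have hsub := (IsClopen.connectedComponent_subset ⟨hUclosed, hUopen⟩ hpdU)
      have : p1 ∈ connectedComponent pd := by
        rw [h]; exact mem_connectedComponent
      exact hp1U (hsub this)
    intro hcard
    have := (Nat.card_eq_one_iff_unique.mp hcard.symm).1
    exact hne (this.allEq _ _)
  · -- continuity in u, for v > 1
    intro v hv
    set δ := min ((v-1)/16) (1/4) with hδdef
    have hδ0 : 0 < δ := by
      apply lt_min <;> linarith
    have hδ14 : δ ≤ 1/4 := min_le_right _ _
    have hδv : δ ≤ (v-1)/16 := min_le_left _ _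
    have hkey : ∀ u ∈ Ioo (1-δ) (1+δ),
        sizeFun (fun x : ↥(Icc (0:ℝ) 1) => Frosini.f x.1) u v = 1 := by
      intro u hu
      set S := {x : ↥(Icc (0:ℝ) 1) | Frosini.f x.1 ≤ v} with hS
      have h1Icc : (1:ℝ) ∈ Icc (0:ℝ) 1 := by norm_num
      have hp1S : Frosini.f (1:ℝ) ≤ v := by rw [Frosini.f_one]; linarith
      set p1 : ↥S := ⟨⟨1, h1Icc⟩, hp1S⟩ with hp1
      have hset : {C : Set ↥S | ∃ p : ↥S, Frosini.f (p:↥(Icc (0:ℝ) 1)).1 ≤ u ∧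
          C = connectedComponent p} = {connectedComponent p1} := by
        apply Subset.antisymm
        · rintro C ⟨p, hpu, rfl⟩
          simp only [mem_singleton_iff]
          have hfl := Frosini.f_lower p.1.1
          have htδ : 1/2 - p.1.1 < δ/2 := by
            rcases hu with ⟨_, hu2⟩
            linarith
          refine Frosini.comp_eq p.1.2.1 le_rfl ?_ p p1 ⟨le_rfl, p.1.2.2⟩ ⟨p.1.2.2, le_rfl⟩
          intro s hs1 hs2
          rcases le_or_gt (1/2) s with h | h
          · rw [Frosini.f_of_half h]; linarith
          · have := Frosini.f_upper h
            have hst : 1/2 - s ≤ 1/2 - p.1.1 := by linarith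
            linarith
        · intro C hC
          simp only [mem_singleton_iff] at hC
          refine ⟨p1, ?_, hC⟩
          show Frosini.f (1:ℝ) ≤ u
          rw [Frosini.f_one]
          rcases hu with ⟨hu1, _⟩
          linarith
      unfold sizeFun
      rw [hset, Set.ncard_singleton]
    apply Filter.EventuallyEq.continuousAt (y := (1:ℝ))
    filter_upwards [Ioo_mem_nhds (show (1:ℝ)-δ < 1 by linarith)
      (show (1:ℝ) < 1+δ by linarith)] with u hu
    rw [hkey u hu]
    norm_num
  · -- continuity in v, for u < 1
    intro u hu
    rcases lt_or_ge u 0 with hu0 | hu0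
    · have hkey : ∀ v : ℝ,
          sizeFun (fun x : ↥(Icc (0:ℝ) 1) => Frosini.f x.1) u v = 0 := by
        intro v
        unfold sizeFun
        have hempty : {C : Set ↥{x : ↥(Icc (0:ℝ) 1) | Frosini.f x.1 ≤ v} |
            ∃ p : ↥{x : ↥(Icc (0:ℝ) 1) | Frosini.f x.1 ≤ v},
              Frosini.f (p : ↥(Icc (0:ℝ) 1)).1 ≤ u ∧ C = connectedComponent p} = ∅ := by
          rw [Set.eq_empty_iff_forall_notMem]
          rintro C ⟨p, hpu, _⟩
          have := Frosini.f_lower p.1.1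
          have := p.1.2.2
          linarith
        rw [hempty, Set.ncard_empty]
      apply Filter.EventuallyEq.continuousAt (y := (0:ℝ))
      filter_upwards with v
      rw [hkey v]
      norm_num
    · have hkey : ∀ v ∈ Ioi ((1+u)/2),
          sizeFun (fun x : ↥(Icc (0:ℝ) 1) => Frosini.f x.1) u v = 1 := by
        intro v hv
        simp only [mem_Ioi] at hv
        set S := {x : ↥(Icc (0:ℝ) 1) | Frosini.f x.1 ≤ v} with hS
        have h1Icc : (1:ℝ) ∈ Icc (0:ℝ) 1 := by norm_num
        have hp1S : Frosini.f (1:ℝ) ≤ v := by rw [Frosini.f_one]; linarith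
        set p1 : ↥S := ⟨⟨1, h1Icc⟩, hp1S⟩ with hp1
        have hset : {C : Set ↥S | ∃ p : ↥S, Frosini.f (p:↥(Icc (0:ℝ) 1)).1 ≤ u ∧
            C = connectedComponent p} = {connectedComponent p1} := by
          apply Subset.antisymm
          · rintro C ⟨p, hpu, rfl⟩
            simp only [mem_singleton_iff]
            have hfl := Frosini.f_lower p.1.1
            have ht2 : (1/2:ℝ) ≤ p.1.1 := by
              by_contra hc
              push_neg at hc
              linarith
            refine Frosini.comp_eq p.1.2.1 le_rfl ?_ p p1 ⟨le_rfl, p.1.2.2⟩ ⟨p.1.2.2, le_rfl⟩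
            intro s hs1 hs2
            rw [Frosini.f_of_half (le_trans ht2 hs1)]
            rw [Frosini.f_of_half ht2] at hpu
            linarith
          · intro C hC
            simp only [mem_singleton_iff] at hC
            refine ⟨p1, ?_, hC⟩
            show Frosini.f (1:ℝ) ≤ u
            rw [Frosini.f_one]
            linarith
        unfold sizeFun
        rw [hset, Set.ncard_singleton]
      apply Filter.EventuallyEq.continuousAt (y := (1:ℝ))
      filter_upwards [Ioi_mem_nhds (by linarith : (1+u)/2 < 1)] with v hv
      rw [hkey v hv]
      norm_num
end

section
/- In the setting X = A ∪ B with the standing hypotheses, let f_0 : Ȟ_0((A∩B)_u) → Ȟ_0((A∩B)_v) be induced by inclusion (u < v). If f_0 is surjective, then the relative Mayer–Vietoris map α_{v,u} : Ȟ_0((A∩B)_v, (A∩B)_u) → Ȟ_0(A_v, A_u) ⊕ Ȟ_0(B_v, B_u) is the zero map, and moreover im α = ker β for the restricted Mayer–Vietoris maps α = α_v|_{im f_0} and β = β_v|_{im g_0}. -/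
universe u v

/-- An abstract packaging of (degree-0) Čech homology with coefficients in a field `K`,
applied to the subspaces of a topological space `X`: absolute groups `Ȟ₀(S)`, relative
groups `Ȟ₀(T, S)`, inclusion-induced homomorphisms, together with the standard
properties of Čech homology on compact Hausdorff pairs with field coefficients
(rank `Ȟ₀` = number of connected components, functoriality, exactness of the final part
of the homology sequence of a pair, and exactness of the final part of the absolute and
relative Mayer–Vietoris sequences of compact triads). -/
structure CechTheory (X : Type u) [TopologicalSpace X] (K : Type v) [Field K] where
  /-- the 0-th Čech homology group of a subspace -/
  H0 : Set X → Type v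
  [h0Add : ∀ S : Set X, AddCommGroup (H0 S)]
  [h0Mod : ∀ S : Set X, Module K (H0 S)]
  /-- the relative 0-th Čech homology group `Ȟ₀(T, S)` -/
  H0rel : Set X → Set X → Type v
  [h0relAdd : ∀ T S : Set X, AddCommGroup (H0rel T S)]
  [h0relMod : ∀ T S : Set X, Module K (H0rel T S)]
  /-- the homomorphism induced by an inclusion of subspaces -/
  map : ∀ {S T : Set X}, S ⊆ T → (H0 S →ₗ[K] H0 T)
  /-- the homomorphism induced by an inclusion of pairs -/
  maprel : ∀ {T S T' S' : Set X}, T ⊆ T' → S ⊆ S' → (H0rel T S →ₗ[K] H0rel T' S')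
  /-- the natural map `Ȟ₀(T) → Ȟ₀(T, S)` -/
  quot : ∀ T S : Set X, H0 T →ₗ[K] H0rel T S
  map_comp : ∀ {S T U : Set X} (h₁ : S ⊆ T) (h₂ : T ⊆ U),
    (map h₂).comp (map h₁) = map (h₁.trans h₂)
  /-- the homology class of a point -/
  cls : ∀ S : Set X, S → H0 S
  map_cls : ∀ {S T : Set X} (h : S ⊆ T) (x : S), map h (cls S x) = cls T ⟨x.1, h x.2⟩
  cls_eq_iff : ∀ S : Set X, IsCompact S → ∀ x y : S,
    (cls S x = cls S y ↔ connectedComponent x = connectedComponent y)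
  cls_span : ∀ S : Set X, IsCompact S →
    Submodule.span K (Set.range (cls S)) = ⊤
  cls_indep : ∀ S : Set X, IsCompact S → ∀ f : ConnectedComponents ↥S → ↥S,
    (∀ c, ConnectedComponents.mk (f c) = c) →
    LinearIndependent K fun c => cls S (f c)
  quot_surjective : ∀ T S : Set X, S ⊆ T → Function.Surjective (quot T S)
  exact_pair : ∀ {S T : Set X} (h : S ⊆ T),
    LinearMap.range (map h) = LinearMap.ker (quot T S)
  /-- exactness of the Mayer–Vietoris sequence of a compact triad at `Ȟ₀(A) ⊕ Ȟ₀(B)` -/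
  mv_exact : ∀ A B : Set X, IsCompact A → IsCompact B →
    LinearMap.range ((map (show A ∩ B ⊆ A from Set.inter_subset_left)).prod
        (map (show A ∩ B ⊆ B from Set.inter_subset_right))) =
      LinearMap.ker ((map (show A ⊆ A ∪ B from Set.subset_union_left)).comp
          (LinearMap.fst K (H0 A) (H0 B)) -
        (map (show B ⊆ A ∪ B from Set.subset_union_right)).comp
          (LinearMap.snd K (H0 A) (H0 B)))
  /-- surjectivity of `β : Ȟ₀(A) ⊕ Ȟ₀(B) → Ȟ₀(A ∪ B)` -/
  mv_beta_surjective : ∀ A B : Set X, IsCompact A → IsCompact B →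
    Function.Surjective ((map (show A ⊆ A ∪ B from Set.subset_union_left)).comp
        (LinearMap.fst K (H0 A) (H0 B)) -
      (map (show B ⊆ A ∪ B from Set.subset_union_right)).comp
        (LinearMap.snd K (H0 A) (H0 B)))
  /-- exactness of the relative Mayer–Vietoris sequence at `Ȟ₀(A,A') ⊕ Ȟ₀(B,B')` -/
  mvrel_exact : ∀ A B A' B' : Set X, IsCompact A → IsCompact B → A' ⊆ A → B' ⊆ B →
    LinearMap.range ((maprel (show A ∩ B ⊆ A from Set.inter_subset_left)
          (show A' ∩ B' ⊆ A' from Set.inter_subset_left)).prod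
        (maprel (show A ∩ B ⊆ B from Set.inter_subset_right)
          (show A' ∩ B' ⊆ B' from Set.inter_subset_right))) =
      LinearMap.ker ((maprel (show A ⊆ A ∪ B from Set.subset_union_left)
            (show A' ⊆ A' ∪ B' from Set.subset_union_left)).comp
          (LinearMap.fst K (H0rel A A') (H0rel B B')) -
        (maprel (show B ⊆ A ∪ B from Set.subset_union_right)
            (show B' ⊆ A' ∪ B' from Set.subset_union_right)).comp
          (LinearMap.snd K (H0rel A A') (H0rel B B')))
  /-- surjectivity of the relative `β` -/
  mvrel_beta_surjective : ∀ A B A' B' : Set X, IsCompact A → IsCompact B →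
    A' ⊆ A → B' ⊆ B →
    Function.Surjective ((maprel (show A ⊆ A ∪ B from Set.subset_union_left)
          (show A' ⊆ A' ∪ B' from Set.subset_union_left)).comp
        (LinearMap.fst K (H0rel A A') (H0rel B B')) -
      (maprel (show B ⊆ A ∪ B from Set.subset_union_right)
          (show B' ⊆ A' ∪ B' from Set.subset_union_right)).comp
        (LinearMap.snd K (H0rel A A') (H0rel B B')))

attribute [instance] CechTheory.h0Add CechTheory.h0Mod CechTheory.h0relAdd
  CechTheory.h0relMod

/-- The relative size function: `sizeFunOn S φ u v` is the number of connected components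
of the sublevel set `S_v = S ∩ {φ ≤ v}` containing at least one point of
`S_u = S ∩ {φ ≤ u}`. -/
noncomputable def sizeFunOn {X : Type u} [TopologicalSpace X] (S : Set X) (φ : X → ℝ)
    (u v : ℝ) : ℕ :=
  Set.ncard {C : Set ↥(S ∩ {x : X | φ x ≤ v}) |
    ∃ p : ↥(S ∩ {x : X | φ x ≤ v}), φ (p : X) ≤ u ∧ C = connectedComponent p}

section MV

variable {X : Type u} [TopologicalSpace X] {K : Type v} [Field K]

/-- The Mayer–Vietoris map
`α_v : Ȟ₀((A∩B)_v) → Ȟ₀(A_v) ⊕ Ȟ₀(B_v)` for the sublevel sets at level `v`. -/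
noncomputable def CechTheory.alphaAbs (C : CechTheory X K) (φ : X → ℝ) (A B : Set X)
    (v : ℝ) :
    C.H0 ((A ∩ B) ∩ {x : X | φ x ≤ v}) →ₗ[K]
      C.H0 (A ∩ {x : X | φ x ≤ v}) × C.H0 (B ∩ {x : X | φ x ≤ v}) :=
  (C.map (show (A ∩ B) ∩ {x : X | φ x ≤ v} ⊆ A ∩ {x : X | φ x ≤ v} from
      fun x hx => ⟨hx.1.1, hx.2⟩)).prod
    (C.map (show (A ∩ B) ∩ {x : X | φ x ≤ v} ⊆ B ∩ {x : X | φ x ≤ v} from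
      fun x hx => ⟨hx.1.2, hx.2⟩))

/-- The relative Mayer–Vietoris map
`α_{v,u} : Ȟ₀((A∩B)_v, (A∩B)_u) → Ȟ₀(A_v, A_u) ⊕ Ȟ₀(B_v, B_u)`. -/
noncomputable def CechTheory.alphaRel (C : CechTheory X K) (φ : X → ℝ) (A B : Set X)
    (u v : ℝ) :
    C.H0rel ((A ∩ B) ∩ {x : X | φ x ≤ v}) ((A ∩ B) ∩ {x : X | φ x ≤ u}) →ₗ[K]
      C.H0rel (A ∩ {x : X | φ x ≤ v}) (A ∩ {x : X | φ x ≤ u}) ×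
        C.H0rel (B ∩ {x : X | φ x ≤ v}) (B ∩ {x : X | φ x ≤ u}) :=
  (C.maprel (show (A ∩ B) ∩ {x : X | φ x ≤ v} ⊆ A ∩ {x : X | φ x ≤ v} from
      fun x hx => ⟨hx.1.1, hx.2⟩)
    (show (A ∩ B) ∩ {x : X | φ x ≤ u} ⊆ A ∩ {x : X | φ x ≤ u} from
      fun x hx => ⟨hx.1.1, hx.2⟩)).prod
  (C.maprel (show (A ∩ B) ∩ {x : X | φ x ≤ v} ⊆ B ∩ {x : X | φ x ≤ v} from
      fun x hx => ⟨hx.1.2, hx.2⟩)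
    (show (A ∩ B) ∩ {x : X | φ x ≤ u} ⊆ B ∩ {x : X | φ x ≤ u} from
      fun x hx => ⟨hx.1.2, hx.2⟩))

end MV

section Persist

variable {X : Type u} [TopologicalSpace X] {K : Type v} [Field K]

/-- The homomorphism `Ȟ₀(S_u) → Ȟ₀(S_v)` induced by the inclusion of sublevel sets
(whose image is the 0-th persistent Čech homology group `Ȟ₀^{u,v}(S)`). -/
noncomputable def CechTheory.persistMap (C : CechTheory X K) (φ : X → ℝ) (S : Set X)
    {u v : ℝ} (huv : u ≤ v) :
    C.H0 (S ∩ {x : X | φ x ≤ u}) →ₗ[K] C.H0 (S ∩ {x : X | φ x ≤ v}) :=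
  C.map (show S ∩ {x : X | φ x ≤ u} ⊆ S ∩ {x : X | φ x ≤ v} from
    fun x hx => ⟨hx.1, le_trans hx.2 huv⟩)

/-- The Mayer–Vietoris map `β_v : Ȟ₀(A_v) ⊕ Ȟ₀(B_v) → Ȟ₀(A_v ∪ B_v)`. -/
noncomputable def CechTheory.betaAbs (C : CechTheory X K) (φ : X → ℝ) (A B : Set X)
    (v : ℝ) :
    C.H0 (A ∩ {x : X | φ x ≤ v}) × C.H0 (B ∩ {x : X | φ x ≤ v}) →ₗ[K]
      C.H0 ((A ∩ {x : X | φ x ≤ v}) ∪ (B ∩ {x : X | φ x ≤ v})) :=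
  (C.map (show A ∩ {x : X | φ x ≤ v} ⊆
        (A ∩ {x : X | φ x ≤ v}) ∪ (B ∩ {x : X | φ x ≤ v}) from Set.subset_union_left)).comp
      (LinearMap.fst K _ _) -
    (C.map (show B ∩ {x : X | φ x ≤ v} ⊆
        (A ∩ {x : X | φ x ≤ v}) ∪ (B ∩ {x : X | φ x ≤ v}) from
        Set.subset_union_right)).comp (LinearMap.snd K _ _)

end Persist

/-- Lemma 4.10: for `X = A ∪ B` with the standing hypotheses and
`u < v`, if the inclusion-induced map `f₀ : Ȟ₀((A∩B)_u) → Ȟ₀((A∩B)_v)` is surjective,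
then the relative Mayer–Vietoris map `α_{v,u}` is the zero map, and the image of the
restriction `α = α_v|_{im f₀}` equals the kernel of the restriction `β = β_v|_{im g₀}`. -/
theorem alphaRel_eq_zero_of_f0_surjective {X : Type u} [TopologicalSpace X]
    [CompactSpace X] [T2Space X] [LocallyConnectedSpace X] [Nonempty X] {K : Type v}
    [Field K] (C : CechTheory X K) {A B : Set X} (hA : IsClosed A) (hB : IsClosed B)
    (hUnion : A ∪ B = Set.univ) (hInt : interior A ∪ interior B = Set.univ)
    [LocallyConnectedSpace ↥A] [LocallyConnectedSpace ↥B]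
    [LocallyConnectedSpace ↥(A ∩ B)]
    {φ : X → ℝ} (hφ : Continuous φ) {u v : ℝ} (huv : u < v)
    (hf0 : Function.Surjective (C.persistMap φ (A ∩ B) huv.le)) :
    C.alphaRel φ A B u v = 0 ∧
    Submodule.map (C.alphaAbs φ A B v) (LinearMap.range (C.persistMap φ (A ∩ B) huv.le))
      = (LinearMap.range (C.persistMap φ A huv.le)).prod
          (LinearMap.range (C.persistMap φ B huv.le)) ⊓
        LinearMap.ker (C.betaAbs φ A B v) := by
  have key : ∀ {S T U : Set X} (h₁ : S ⊆ T) (h₂ : T ⊆ U) (x : C.H0 S),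
      C.map h₂ (C.map h₁ x) = C.map (h₁.trans h₂) x := by
    intro S T U h₁ h₂ x
    rw [← LinearMap.comp_apply, C.map_comp]
  have hsub : (A ∩ B) ∩ {x : X | φ x ≤ u} ⊆ (A ∩ B) ∩ {x : X | φ x ≤ v} :=
    fun x hx => ⟨hx.1, le_trans hx.2 huv.le⟩
  constructor
  · -- `α_{v,u} = 0` since the relative group is trivial
    apply LinearMap.ext
    intro z
    have hz : z = 0 := by
      obtain ⟨y, rfl⟩ := C.quot_surjective _ _ hsub z
      have hy : y ∈ LinearMap.ker (C.quot ((A ∩ B) ∩ {x : X | φ x ≤ v})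
          ((A ∩ B) ∩ {x : X | φ x ≤ u})) := by
        rw [← C.exact_pair hsub]
        exact hf0 y
      simpa using hy
    rw [hz]
    simp
  · apply le_antisymm
    · rintro y ⟨x, ⟨w, rfl⟩, rfl⟩
      refine ⟨⟨?_, ?_⟩, ?_⟩
      · refine ⟨C.map (show (A ∩ B) ∩ {x : X | φ x ≤ u} ⊆ A ∩ {x : X | φ x ≤ u} from
            fun x hx => ⟨hx.1.1, hx.2⟩) w, ?_⟩
        simp only [CechTheory.persistMap, CechTheory.alphaAbs, LinearMap.prod_apply,
          Function.prod]
        rw [key, key]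
      · refine ⟨C.map (show (A ∩ B) ∩ {x : X | φ x ≤ u} ⊆ B ∩ {x : X | φ x ≤ u} from
            fun x hx => ⟨hx.1.2, hx.2⟩) w, ?_⟩
        simp only [CechTheory.persistMap, CechTheory.alphaAbs, LinearMap.prod_apply,
          Function.prod]
        rw [key, key]
      · show C.betaAbs φ A B v _ = 0
        simp only [CechTheory.betaAbs, CechTheory.alphaAbs, CechTheory.persistMap,
          LinearMap.sub_apply, LinearMap.comp_apply, LinearMap.fst_apply,
          LinearMap.snd_apply, LinearMap.prod_apply, Function.prod]
        rw [key, key, key, key]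
        exact sub_self _
    · rintro ⟨a, b⟩ ⟨⟨⟨a₀, ha⟩, ⟨b₀, hb⟩⟩, hker⟩
      have hAc : IsCompact (A ∩ {x : X | φ x ≤ v}) :=
        (hA.inter (isClosed_le hφ continuous_const)).isCompact
      have hBc : IsCompact (B ∩ {x : X | φ x ≤ v}) :=
        (hB.inter (isClosed_le hφ continuous_const)).isCompact
      have hmv := C.mv_exact (A ∩ {x : X | φ x ≤ v}) (B ∩ {x : X | φ x ≤ v}) hAc hBc
      have hmem : (a, b) ∈ LinearMap.ker
          ((C.map (show A ∩ {x : X | φ x ≤ v} ⊆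
              (A ∩ {x : X | φ x ≤ v}) ∪ (B ∩ {x : X | φ x ≤ v}) from
              Set.subset_union_left)).comp
            (LinearMap.fst K (C.H0 (A ∩ {x : X | φ x ≤ v}))
              (C.H0 (B ∩ {x : X | φ x ≤ v}))) -
          (C.map (show B ∩ {x : X | φ x ≤ v} ⊆
              (A ∩ {x : X | φ x ≤ v}) ∪ (B ∩ {x : X | φ x ≤ v}) from
              Set.subset_union_right)).comp
            (LinearMap.snd K (C.H0 (A ∩ {x : X | φ x ≤ v}))
              (C.H0 (B ∩ {x : X | φ x ≤ v})))) := hker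
      rw [← hmv] at hmem
      obtain ⟨c, hc⟩ := hmem
      have hE : (A ∩ {x : X | φ x ≤ v}) ∩ (B ∩ {x : X | φ x ≤ v}) ⊆
          (A ∩ B) ∩ {x : X | φ x ≤ v} :=
        fun x hx => ⟨⟨hx.1.1, hx.2.1⟩, hx.1.2⟩
      refine ⟨C.map hE c, hf0 _, ?_⟩
      have h1 := congrArg Prod.fst hc
      have h2 := congrArg Prod.snd hc
      simp only [LinearMap.prod_apply, Function.prod] at h1 h2
      simp only [CechTheory.alphaAbs, LinearMap.prod_apply, Function.prod]
      rw [key, key]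
      exact Prod.ext h1 h2
end

section
/- In the setting X = A ∪ B with the standing hypotheses, fix u < v. If ℓ_{(A∩B, φ|A∩B)}(u, v') = ℓ_{(A∩B, φ|A∩B)}(v, v') ≤ 1 for every v' > v, then both ker α_v = 0 and ker α_{v,u} = 0; in particular ℓ_{(X,φ)}(u,v) = ℓ_{(A,φ|A)}(u,v) + ℓ_{(B,φ|B)}(u,v) − ℓ_{(A∩B,φ|A∩B)}(u,v). -/
universe u v

section AuxTopology
open Set

variable {X : Type*} [TopologicalSpace X]

/-- The set of connected components of `T` containing a point of level `≤ w`. -/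
def comps (φ : X → ℝ) (T : Set X) (w : ℝ) : Set (Set X) :=
  {C | ∃ p ∈ T, φ p ≤ w ∧ C = connectedComponentIn T p}

lemma image_connectedComponentIn {S : Set X} {F : Set ↥S} {y : ↥S} (hy : y ∈ F) :
    Subtype.val '' connectedComponentIn F y
      = connectedComponentIn (Subtype.val '' F) (y : X) := by
  apply Subset.antisymm
  · apply IsPreconnected.subset_connectedComponentIn
    · exact (Topology.IsInducing.subtypeVal.isPreconnected_image).mpr
        isPreconnected_connectedComponentIn
    · exact ⟨y, mem_connectedComponentIn hy, rfl⟩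
    · exact image_mono (connectedComponentIn_subset F y)
  · set D := connectedComponentIn (Subtype.val '' F) (y : X) with hD
    have hDF : D ⊆ Subtype.val '' F := connectedComponentIn_subset _ _
    have himg : Subtype.val '' (Subtype.val ⁻¹' D : Set ↥S) = D := by
      apply image_preimage_eq_of_subset
      exact hDF.trans (image_subset_range _ _)
    have hpre : IsPreconnected (Subtype.val ⁻¹' D : Set ↥S) := by
      rw [← Topology.IsInducing.subtypeVal.isPreconnected_image (s := Subtype.val ⁻¹' D), himg]
      exact isPreconnected_connectedComponentIn
    have hsubF : (Subtype.val ⁻¹' D : Set ↥S) ⊆ F := by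
      intro z hz
      obtain ⟨w, hwF, hw⟩ := hDF hz
      rwa [← Subtype.val_injective hw]
    have hyD : y ∈ (Subtype.val ⁻¹' D : Set ↥S) := by
      exact mem_connectedComponentIn ⟨y, hy, rfl⟩
    have := hpre.subset_connectedComponentIn hyD hsubF
    calc D = Subtype.val '' (Subtype.val ⁻¹' D : Set ↥S) := himg.symm
    _ ⊆ Subtype.val '' connectedComponentIn F y := image_mono this

lemma sizeFunOn_eq_ncard_comps (S : Set X) (φ : X → ℝ) (w v' : ℝ) :
    Set.ncard {C : Set ↥(S ∩ {x : X | φ x ≤ v'}) |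
      ∃ p : ↥(S ∩ {x : X | φ x ≤ v'}), φ (p : X) ≤ w ∧ C = connectedComponent p}
      = (comps φ (S ∩ {x : X | φ x ≤ v'}) w).ncard := by
  set T := S ∩ {x : X | φ x ≤ v'} with hT
  have hinj : Function.Injective (Set.image (Subtype.val : ↥T → X)) :=
    Set.image_injective.mpr Subtype.val_injective
  have himg : (Set.image (Subtype.val : ↥T → X)) ''
      {C : Set ↥T | ∃ p : ↥T, φ (p : X) ≤ w ∧ C = connectedComponent p}
      = comps φ T w := by
    ext D
    constructor
    · rintro ⟨C, ⟨p, hpw, rfl⟩, rfl⟩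
      refine ⟨(p : X), p.2, hpw, ?_⟩
      rw [← connectedComponentIn_univ, image_connectedComponentIn (mem_univ p),
        image_univ, Subtype.range_val]
    · rintro ⟨p, hp, hpw, rfl⟩
      refine ⟨connectedComponent (⟨p, hp⟩ : ↥T), ⟨⟨p, hp⟩, hpw, rfl⟩, ?_⟩
      rw [← connectedComponentIn_univ, image_connectedComponentIn (mem_univ _),
        image_univ, Subtype.range_val]
  rw [← himg, Set.ncard_image_of_injective _ hinj]

lemma comps_finite {Y : Type*} [TopologicalSpace Y] [CompactSpace Y]
    [LocallyConnectedSpace Y] {ψ : Y → ℝ} (hψ : Continuous ψ) {w v' : ℝ} (h : w < v') :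
    (comps ψ {y | ψ y ≤ v'} w).Finite := by
  set U : Set Y := {y | ψ y < v'} with hU
  have hUopen : IsOpen U := isOpen_lt hψ continuous_const
  set K : Set Y := {y | ψ y ≤ w} with hK
  have hKcomp : IsCompact K := (isClosed_le hψ continuous_const).isCompact
  have hcover : K ⊆ ⋃ p : K, connectedComponentIn U (p : Y) := by
    intro p hp
    exact mem_iUnion.mpr ⟨⟨p, hp⟩, mem_connectedComponentIn (lt_of_le_of_lt hp h)⟩
  obtain ⟨t, ht⟩ := hKcomp.elim_finite_subcover
    (fun p : K => connectedComponentIn U (p : Y))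
    (fun p => hUopen.connectedComponentIn) hcover
  apply Set.Finite.subset (t.finite_toSet.image
    (fun p : K => connectedComponentIn {y | ψ y ≤ v'} (p : Y)))
  rintro C ⟨p, hp, hpw, rfl⟩
  obtain ⟨i, hit, hpi⟩ := mem_iUnion₂.mp (ht hpw)
  have hsub : connectedComponentIn U (i : Y) ⊆ connectedComponentIn {y | ψ y ≤ v'} p := by
    apply IsPreconnected.subset_connectedComponentIn isPreconnected_connectedComponentIn hpi
    exact (connectedComponentIn_subset _ _).trans (fun z hz => (le_of_lt (hz : ψ z < v') : ψ z ≤ v'))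
  have hieq : connectedComponentIn {y | ψ y ≤ v'} p
      = connectedComponentIn {y | ψ y ≤ v'} (i : Y) :=
    connectedComponentIn_eq (hsub (mem_connectedComponentIn
      (show (i : Y) ∈ U from lt_of_le_of_lt i.2 h)))
  exact ⟨i, hit, hieq.symm⟩

lemma comps_inter_eq_image (S : Set X) (φ : X → ℝ) (w v' : ℝ) :
    comps φ (S ∩ {x : X | φ x ≤ v'}) w
      = (Set.image (Subtype.val : ↥S → X)) ''
          comps (fun y : ↥S => φ (y : X)) {y : ↥S | φ (y : X) ≤ v'} w := by
  have hval : Subtype.val '' {y : ↥S | φ (y : X) ≤ v'} = S ∩ {x : X | φ x ≤ v'} := by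
    have : {y : ↥S | φ (y : X) ≤ v'} = (Subtype.val : ↥S → X) ⁻¹' {x : X | φ x ≤ v'} := rfl
    rw [this, Subtype.image_preimage_coe]
  ext D
  constructor
  · rintro ⟨p, hp, hpw, rfl⟩
    refine ⟨connectedComponentIn {y : ↥S | φ (y : X) ≤ v'} (⟨p, hp.1⟩ : ↥S),
      ⟨⟨p, hp.1⟩, hp.2, hpw, rfl⟩, ?_⟩
    rw [image_connectedComponentIn hp.2, hval]
  · rintro ⟨C, ⟨p, hp, hpw, rfl⟩, rfl⟩
    refine ⟨(p : X), ?_, hpw, ?_⟩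
    · exact ⟨p.2, hp⟩
    · rw [image_connectedComponentIn hp, hval]

lemma sizeFunOn_eq_comps (S : Set X) (φ : X → ℝ) (w v' : ℝ) :
    sizeFunOn S φ w v' = (comps φ (S ∩ {x : X | φ x ≤ v'}) w).ncard :=
  sizeFunOn_eq_ncard_comps S φ w v'

lemma exists_isClopen_superset {Y : Type*} [TopologicalSpace Y] [CompactSpace Y] [T2Space Y] {x : Y} {U : Set Y}
    (hU : IsOpen U) (hC : connectedComponent x ⊆ U) :
    ∃ Z : Set Y, IsClopen Z ∧ connectedComponent x ⊆ Z ∧ Z ⊆ U := by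
  have hcc := connectedComponent_eq_iInter_isClopen x
  have hcompl : IsCompact Uᶜ := (isClosed_compl_iff.mpr hU).isCompact
  have hempty : Uᶜ ∩ ⋂ Z : {Z : Set Y // IsClopen Z ∧ x ∈ Z}, Z = ∅ := by
    rw [← hcc]
    apply eq_empty_of_forall_notMem
    rintro z ⟨hzU, hzC⟩
    exact hzU (hC hzC)
  obtain ⟨u, hu⟩ := hcompl.elim_finite_subfamily_closed
    (fun Z : {Z : Set Y // IsClopen Z ∧ x ∈ Z} => (Z : Set Y))
    (fun Z => Z.2.1.isClosed) hempty
  refine ⟨⋂ Z ∈ u, (Z : Set Y), isClopen_biInter_finset (fun Z _ => Z.2.1), ?_, ?_⟩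
  · exact subset_iInter₂ fun Z _ => Z.2.1.connectedComponent_subset Z.2.2
  · intro z hz
    by_contra hzU
    exact absurd (by exact hu ▸ ⟨hzU, hz⟩ : z ∈ (∅ : Set Y)) (notMem_empty z)

lemma isPreconnected_iInter_directed {Y : Type*} [TopologicalSpace Y] [T2Space Y] {ι : Type*} [Nonempty ι]
    {C : ι → Set Y} (hdir : Directed (· ⊇ ·) C) (hcomp : ∀ i, IsCompact (C i))
    (hconn : ∀ i, IsPreconnected (C i)) (hne : ∀ i, (C i).Nonempty) :
    IsPreconnected (⋂ i, C i) := by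
  have hcl : ∀ i, IsClosed (C i) := fun i => (hcomp i).isClosed
  have key : ∀ W : Set Y, IsOpen W → (⋂ i, C i) ⊆ W → ∃ i, C i ⊆ W := by
    intro W hW hsub
    by_contra hno
    push_neg at hno
    have hne' : ∀ i, (C i ∩ Wᶜ).Nonempty := by
      intro i
      obtain ⟨z, hz, hzW⟩ := not_subset.mp (hno i)
      exact ⟨z, hz, hzW⟩
    have := IsCompact.nonempty_iInter_of_directed_nonempty_isCompact_isClosed
      (fun i => C i ∩ Wᶜ) (fun i j => by
        obtain ⟨k, h1, h2⟩ := hdir i j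
        exact ⟨k, inter_subset_inter_left _ h1, inter_subset_inter_left _ h2⟩) hne'
      (fun i => (hcomp i).inter_right (isClosed_compl_iff.mpr hW))
      (fun i => (hcl i).inter (isClosed_compl_iff.mpr hW))
    obtain ⟨z, hz⟩ := this
    have hz1 : z ∈ ⋂ i, C i := mem_iInter.mpr fun i => (mem_iInter.mp hz i).1
    exact (mem_iInter.mp hz (Classical.arbitrary ι)).2 (hsub hz1)
  rw [isPreconnected_closed_iff]
  intro t t' ht ht' hcov ⟨a, haK, hat⟩ ⟨b, hbK, hbt'⟩
  by_contra hemp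
  set K := ⋂ i, C i with hK
  have hKcl : IsClosed K := isClosed_iInter hcl
  have hKcomp : IsCompact K := (hcomp (Classical.arbitrary ι)).of_isClosed_subset hKcl
    (iInter_subset _ _)
  have hEcomp : IsCompact (K ∩ t) := hKcomp.inter_right ht
  have hFcomp : IsCompact (K ∩ t') := hKcomp.inter_right ht'
  have hdisj : Disjoint (K ∩ t) (K ∩ t') := by
    rw [Set.disjoint_iff_inter_eq_empty, ← Set.not_nonempty_iff_eq_empty]
    rintro ⟨z, ⟨hzK, hzt⟩, ⟨-, hzt'⟩⟩
    exact hemp ⟨z, hzK, hzt, hzt'⟩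
  obtain ⟨U, V, hUo, hVo, hEU, hFV, hUV⟩ :=
    SeparatedNhds.of_isCompact_isCompact hEcomp hFcomp hdisj
  have hKUV : K ⊆ U ∪ V := by
    intro z hz
    rcases hcov hz with hzt | hzt'
    · exact Or.inl (hEU ⟨hz, hzt⟩)
    · exact Or.inr (hFV ⟨hz, hzt'⟩)
  obtain ⟨i, hi⟩ := key (U ∪ V) (hUo.union hVo) hKUV
  obtain ⟨c, -, hcU, hcV⟩ := (hconn i) U V hUo hVo hi
    ⟨a, iInter_subset _ i haK, hEU ⟨haK, hat⟩⟩
    ⟨b, iInter_subset _ i hbK, hFV ⟨hbK, hbt'⟩⟩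
  exact absurd (Set.disjoint_iff_inter_eq_empty.mp hUV) 
    (by rw [← Set.not_nonempty_iff_eq_empty]; push_neg; exact ⟨c, hcU, hcV⟩)

set_option linter.unusedSectionVars false

variable [CompactSpace X] [T2Space X]

lemma connectedComponentIn_union_eq {TA TB : Set X} (hTA : IsClosed TA) (hTB : IsClosed TB)
    {p : X} (hp : p ∈ TA) (hdisj : connectedComponentIn TA p ∩ TB = ∅) :
    connectedComponentIn (TA ∪ TB) p = connectedComponentIn TA p := by
  haveI : CompactSpace ↥TA := isCompact_iff_compactSpace.mp hTA.isCompact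
  set p' : ↥TA := ⟨p, hp⟩ with hp'
  have hccA : connectedComponentIn TA p = Subtype.val '' connectedComponent p' :=
    connectedComponentIn_eq_image hp
  -- clopen separation inside TA
  have hCU : connectedComponent p' ⊆ (Subtype.val ⁻¹' TBᶜ : Set ↥TA) := by
    intro z hz
    have : (z : X) ∈ connectedComponentIn TA p := hccA ▸ ⟨z, hz, rfl⟩
    intro hzB
    exact absurd (hdisj ▸ ⟨this, hzB⟩ : (z : X) ∈ (∅ : Set X)) (notMem_empty _)
  obtain ⟨Z', hZ'clopen, hCZ', hZ'U⟩ := exists_isClopen_superset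
    (hU := (hTB.isOpen_compl).preimage continuous_subtype_val) hCU
  set Z : Set X := Subtype.val '' Z' with hZ
  have hZsubA : Z ⊆ TA := by rintro z ⟨w, -, rfl⟩; exact w.2
  have hZB : Z ∩ TB = ∅ := by
    apply eq_empty_of_forall_notMem
    rintro z ⟨⟨w, hw, rfl⟩, hzB⟩
    exact hZ'U hw hzB
  have hZclosed : IsClosed Z :=
    (hZ'clopen.isClosed.isCompact.image continuous_subtype_val).isClosed
  have hZcompl : TA \ Z = Subtype.val '' (Z'ᶜ : Set ↥TA) := by
    ext z
    constructor
    · rintro ⟨hzA, hzZ⟩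
      exact ⟨⟨z, hzA⟩, fun h => hzZ ⟨⟨z, hzA⟩, h, rfl⟩, rfl⟩
    · rintro ⟨w, hw, rfl⟩
      refine ⟨w.2, fun h => ?_⟩
      obtain ⟨w', hw', hww⟩ := h
      exact hw (Subtype.val_injective hww ▸ hw')
  have hZcomplClosed : IsClosed (TA \ Z) := by
    rw [hZcompl]
    exact ((hZ'clopen.compl.isClosed).isCompact.image continuous_subtype_val).isClosed
  -- Z is clopen in the subspace TA ∪ TB
  set W := TA ∪ TB with hW
  have hpZ : p ∈ Z := image_mono hCZ' ⟨p', mem_connectedComponent, rfl⟩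
  have hZ2 : IsClopen ((Subtype.val ⁻¹' Z : Set ↥W)) := by
    constructor
    · exact hZclosed.preimage continuous_subtype_val
    · rw [← isClosed_compl_iff]
      have : (Subtype.val ⁻¹' Z : Set ↥W)ᶜ = Subtype.val ⁻¹' ((TA \ Z) ∪ TB) := by
        ext w
        simp only [mem_compl_iff, mem_preimage, mem_union]
        constructor
        · intro hwZ
          rcases w.2 with hA | hB
          · exact Or.inl ⟨hA, hwZ⟩
          · exact Or.inr hB
        · rintro (⟨-, hwZ⟩ | hB)
          · exact hwZ
          · intro hwZ
            exact absurd (hZB ▸ ⟨hwZ, hB⟩ : (w : X) ∈ (∅ : Set X)) (notMem_empty _)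
      rw [this]
      exact (hZcomplClosed.union hTB).preimage continuous_subtype_val
  have hpW : p ∈ W := Or.inl hp
  have hsub1 : connectedComponentIn W p ⊆ Z := by
    rw [connectedComponentIn_eq_image hpW]
    rintro z ⟨w, hw, rfl⟩
    exact hZ2.connectedComponent_subset (show (⟨p, hpW⟩ : ↥W) ∈ _ from hpZ) hw
  apply Subset.antisymm
  · exact IsPreconnected.subset_connectedComponentIn isPreconnected_connectedComponentIn
      (mem_connectedComponentIn hpW) (hsub1.trans hZsubA)
  · exact connectedComponentIn_mono p subset_union_left


lemma comps_subset {T : Set X} {w : ℝ} {C : Set X} (hC : C ∈ comps φ T w) : C ⊆ T := by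
  obtain ⟨p, hp, -, rfl⟩ := hC; exact connectedComponentIn_subset _ _

lemma comps_nonempty {T : Set X} {w : ℝ} {C : Set X} (hC : C ∈ comps φ T w) : C.Nonempty := by
  obtain ⟨p, hp, -, rfl⟩ := hC; exact ⟨p, mem_connectedComponentIn hp⟩

lemma comps_eq_of_mem {T : Set X} {w : ℝ} {C : Set X} (hC : C ∈ comps φ T w) {z : X}
    (hz : z ∈ C) : C = connectedComponentIn T z := by
  obtain ⟨p, hp, -, rfl⟩ := hC; exact connectedComponentIn_eq hz

lemma comps_preconnected {T : Set X} {w : ℝ} {C : Set X} (hC : C ∈ comps φ T w) :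
    IsPreconnected C := by
  obtain ⟨p, hp, -, rfl⟩ := hC; exact isPreconnected_connectedComponentIn

-- a component not meeting TB is a counted component of the union
lemma mem_comps_union_left {TA TB : Set X} (hTA : IsClosed TA) (hTB : IsClosed TB) {w : ℝ}
    {C : Set X} (hC : C ∈ comps φ TA w) (hdisj : C ∩ TB = ∅) : C ∈ comps φ (TA ∪ TB) w := by
  obtain ⟨p, hp, hpw, rfl⟩ := hC
  exact ⟨p, Or.inl hp, hpw, (connectedComponentIn_union_eq hTA hTB hp hdisj).symm⟩

lemma comps_count {TA TB : Set X} (hTA : IsClosed TA) (hTB : IsClosed TB) {u : ℝ}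
    (hI : IsPreconnected (TA ∩ TB))
    (hq : (TA ∩ TB).Nonempty → ∃ q ∈ TA ∩ TB, φ q ≤ u)
    (hfA : (comps φ TA u).Finite) (hfB : (comps φ TB u).Finite) :
    (comps φ (TA ∪ TB) u).ncard + (comps φ (TA ∩ TB) u).ncard
      = (comps φ TA u).ncard + (comps φ TB u).ncard := by
  have hsplit : ∀ C : Set X, C ⊆ TA ∪ TB → IsPreconnected C → C ∩ (TA ∩ TB) = ∅ →
      C ⊆ TA ∨ C ⊆ TB := by
    intro C hCsub hCpre hCI
    by_contra hcon
    push_neg at hcon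
    obtain ⟨hnA, hnB⟩ := hcon
    obtain ⟨a, haC, haA⟩ := not_subset.mp hnA
    obtain ⟨b, hbC, hbB⟩ := not_subset.mp hnB
    have hcov : C ⊆ TBᶜ ∪ TAᶜ := by
      intro z hz
      by_contra h
      simp only [mem_union, mem_compl_iff, not_or, not_not] at h
      exact absurd (hCI ▸ ⟨hz, h.2, h.1⟩ : z ∈ (∅ : Set X)) (notMem_empty _)
    obtain ⟨c, hcC, hc1, hc2⟩ := hCpre TBᶜ TAᶜ hTB.isOpen_compl hTA.isOpen_compl hcov
      ⟨b, hbC, fun h => absurd (hCI ▸ ⟨hbC, (hCsub hbC).resolve_right hbB, h⟩ :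
        b ∈ (∅ : Set X)) (notMem_empty _)⟩
      ⟨a, haC, haA⟩
    rcases hCsub hcC with h | h
    · exact hc2 h
    · exact hc1 h
  rcases (TA ∩ TB).eq_empty_or_nonempty with hIe | hIne
  · -- disjoint case
    have hcompsI : comps φ (TA ∩ TB) u = ∅ := by
      apply eq_empty_of_forall_notMem
      rintro C ⟨p, hp, -, -⟩
      exact absurd (hIe ▸ hp : p ∈ (∅ : Set X)) (notMem_empty _)
    have hunion : comps φ (TA ∪ TB) u = comps φ TA u ∪ comps φ TB u := by
      ext C
      constructor
      · rintro hC
        obtain ⟨p, hp, hpw, rfl⟩ := id hC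
        have hCI : connectedComponentIn (TA ∪ TB) p ∩ (TA ∩ TB) = ∅ := by
          rw [hIe]; exact inter_empty _
        rcases hsplit _ (connectedComponentIn_subset _ _)
            isPreconnected_connectedComponentIn hCI with h | h
        · left
          have hpA : p ∈ TA := h (mem_connectedComponentIn hp)
          have : connectedComponentIn TA p ∩ TB = ∅ := by
            apply eq_empty_of_forall_notMem
            rintro z ⟨hz1, hz2⟩
            exact absurd (hIe ▸ ⟨(connectedComponentIn_subset _ _) hz1, hz2⟩ :
              z ∈ (∅ : Set X)) (notMem_empty _)
          exact ⟨p, hpA, hpw, connectedComponentIn_union_eq hTA hTB hpA this⟩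
        · right
          have hpB : p ∈ TB := h (mem_connectedComponentIn hp)
          have : connectedComponentIn TB p ∩ TA = ∅ := by
            apply eq_empty_of_forall_notMem
            rintro z ⟨hz1, hz2⟩
            exact absurd (hIe ▸ ⟨hz2, (connectedComponentIn_subset _ _) hz1⟩ :
              z ∈ (∅ : Set X)) (notMem_empty _)
          refine ⟨p, hpB, hpw, ?_⟩
          rw [union_comm]
          exact connectedComponentIn_union_eq hTB hTA hpB this
      · rintro (hC | hC)
        · apply mem_comps_union_left hTA hTB hC
          apply eq_empty_of_forall_notMem
          rintro z ⟨hz1, hz2⟩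
          exact absurd (hIe ▸ ⟨comps_subset hC hz1, hz2⟩ : z ∈ (∅ : Set X)) (notMem_empty _)
        · rw [union_comm]
          apply mem_comps_union_left hTB hTA hC
          apply eq_empty_of_forall_notMem
          rintro z ⟨hz1, hz2⟩
          exact absurd (hIe ▸ ⟨hz2, comps_subset hC hz1⟩ : z ∈ (∅ : Set X)) (notMem_empty _)
    have hdisjAB : Disjoint (comps φ TA u) (comps φ TB u) := by
      rw [Set.disjoint_iff_inter_eq_empty]
      apply eq_empty_of_forall_notMem
      rintro C ⟨hCA, hCB⟩
      obtain ⟨z, hz⟩ := comps_nonempty hCA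
      exact absurd (hIe ▸ ⟨comps_subset hCA hz, comps_subset hCB hz⟩ : z ∈ (∅ : Set X))
        (notMem_empty _)
    rw [hcompsI, hunion, Set.ncard_empty, Set.ncard_union_eq hdisjAB hfA hfB]
    omega
  · -- overlapping case
    obtain ⟨q, hqI, hqu⟩ := hq hIne
    set DA := connectedComponentIn TA q with hDA
    set DB := connectedComponentIn TB q with hDB
    set DX := connectedComponentIn (TA ∪ TB) q with hDX
    have hDAmem : DA ∈ comps φ TA u := ⟨q, hqI.1, hqu, rfl⟩
    have hDBmem : DB ∈ comps φ TB u := ⟨q, hqI.2, hqu, rfl⟩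
    have hDXmem : DX ∈ comps φ (TA ∪ TB) u := ⟨q, Or.inl hqI.1, hqu, rfl⟩
    have hcompsI : comps φ (TA ∩ TB) u = {TA ∩ TB} := by
      ext C
      constructor
      · rintro ⟨p, hp, -, rfl⟩
        exact hI.connectedComponentIn hp
      · rintro rfl
        exact ⟨q, hqI, hqu, (hI.connectedComponentIn hqI).symm⟩
    -- key1 : counted components of TA other than DA avoid TB
    have key1 : ∀ C ∈ comps φ TA u, C ≠ DA → C ∩ TB = ∅ := by
      intro C hC hCne
      have hCI : C ∩ (TA ∩ TB) = ∅ := by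
        by_contra h
        obtain ⟨z, hzC, hzI⟩ := nonempty_iff_ne_empty.mpr h
        have h1 : C = connectedComponentIn TA z := comps_eq_of_mem hC hzC
        have h2 : TA ∩ TB ⊆ C := by
          rw [h1]
          exact hI.subset_connectedComponentIn hzI inter_subset_left
        exact hCne ((comps_eq_of_mem hC (h2 hqI)).trans hDA.symm)
      apply eq_empty_of_forall_notMem
      rintro z ⟨hz1, hz2⟩
      exact absurd (hCI ▸ ⟨hz1, comps_subset hC hz1, hz2⟩ : z ∈ (∅ : Set X)) (notMem_empty _)
    have key1B : ∀ C ∈ comps φ TB u, C ≠ DB → C ∩ TA = ∅ := by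
      intro C hC hCne
      have hCI : C ∩ (TA ∩ TB) = ∅ := by
        by_contra h
        obtain ⟨z, hzC, hzI⟩ := nonempty_iff_ne_empty.mpr h
        have h2 : TA ∩ TB ⊆ C := by
          rw [comps_eq_of_mem hC hzC]
          exact hI.subset_connectedComponentIn hzI inter_subset_right
        exact hCne ((comps_eq_of_mem hC (h2 hqI)).trans hDB.symm)
      apply eq_empty_of_forall_notMem
      rintro z ⟨hz1, hz2⟩
      exact absurd (hCI ▸ ⟨hz1, hz2, comps_subset hC hz1⟩ : z ∈ (∅ : Set X)) (notMem_empty _)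
    have hdecomp : comps φ (TA ∪ TB) u
        = insert DX ((comps φ TA u \ {DA}) ∪ (comps φ TB u \ {DB})) := by
      ext C
      constructor
      · intro hC
        rcases eq_empty_or_nonempty (C ∩ (TA ∩ TB)) with hCI | ⟨z, hzC, hzI⟩
        · -- C avoids the intersection
          rcases hsplit C (comps_subset hC) (comps_preconnected hC) hCI with h | h
          · right; left
            obtain ⟨p, hp, hpw, rfl⟩ := id hC
            have hpA : p ∈ TA := h (mem_connectedComponentIn hp)
            have hCA : connectedComponentIn TA p ∩ TB = ∅ := by
              apply eq_empty_of_forall_notMem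
              rintro z ⟨hz1, hz2⟩
              have hz3 : z ∈ connectedComponentIn (TA ∪ TB) p := by
                apply IsPreconnected.subset_connectedComponentIn
                  isPreconnected_connectedComponentIn (mem_connectedComponentIn hpA)
                  ((connectedComponentIn_subset _ _).trans subset_union_left)
                exact hz1
              exact absurd (hCI ▸ ⟨hz3, (connectedComponentIn_subset _ _) hz1, hz2⟩ :
                z ∈ (∅ : Set X)) (notMem_empty _)
            have heq := connectedComponentIn_union_eq hTA hTB hpA hCA
            constructor
            · exact ⟨p, hpA, hpw, heq⟩
            · intro hmem
              have hCDA : connectedComponentIn (TA ∪ TB) p = DA := mem_singleton_iff.mp hmem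
              have : TA ∩ TB ⊆ connectedComponentIn (TA ∪ TB) p := by
                rw [hCDA, hDA]
                exact hI.subset_connectedComponentIn hqI inter_subset_left
              exact absurd (hCI ▸ ⟨this hqI, hqI⟩ : q ∈ (∅ : Set X)) (notMem_empty _)
          · right; right
            obtain ⟨p, hp, hpw, rfl⟩ := id hC
            have hpB : p ∈ TB := h (mem_connectedComponentIn hp)
            have hCB : connectedComponentIn TB p ∩ TA = ∅ := by
              apply eq_empty_of_forall_notMem
              rintro z ⟨hz1, hz2⟩
              have hz3 : z ∈ connectedComponentIn (TA ∪ TB) p := by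
                apply IsPreconnected.subset_connectedComponentIn
                  isPreconnected_connectedComponentIn (mem_connectedComponentIn hpB)
                  ((connectedComponentIn_subset _ _).trans subset_union_right)
                exact hz1
              exact absurd (hCI ▸ ⟨hz3, hz2, (connectedComponentIn_subset _ _) hz1⟩ :
                z ∈ (∅ : Set X)) (notMem_empty _)
            have heq : connectedComponentIn (TA ∪ TB) p = connectedComponentIn TB p := by
              rw [union_comm]
              exact connectedComponentIn_union_eq hTB hTA hpB hCB
            constructor
            · exact ⟨p, hpB, hpw, heq⟩
            · intro hmem
              have hCDB : connectedComponentIn (TA ∪ TB) p = DB := mem_singleton_iff.mp hmem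
              have : TA ∩ TB ⊆ connectedComponentIn (TA ∪ TB) p := by
                rw [hCDB, hDB]
                exact hI.subset_connectedComponentIn hqI inter_subset_right
              exact absurd (hCI ▸ ⟨this hqI, hqI⟩ : q ∈ (∅ : Set X)) (notMem_empty _)
        · -- C meets the intersection: C = DX
          left
          have h1 : C = connectedComponentIn (TA ∪ TB) z := comps_eq_of_mem hC hzC
          have h2 : TA ∩ TB ⊆ C := by
            rw [h1]
            exact hI.subset_connectedComponentIn hzI
              (inter_subset_left.trans subset_union_left)
          rw [comps_eq_of_mem hC (h2 hqI), hDX]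
      · rintro (rfl | (⟨hC, hne⟩ | ⟨hC, hne⟩))
        · exact hDXmem
        · exact mem_comps_union_left hTA hTB hC
            (key1 _ hC (fun h => hne (mem_singleton_iff.mpr h)))
        · rw [union_comm]
          exact mem_comps_union_left hTB hTA hC
            (key1B _ hC (fun h => hne (mem_singleton_iff.mpr h)))
    -- cardinalities
    have hfA' : (comps φ TA u \ {DA}).Finite := hfA.subset diff_subset
    have hfB' : (comps φ TB u \ {DB}).Finite := hfB.subset diff_subset
    have hDXnotmem : DX ∉ (comps φ TA u \ {DA}) ∪ (comps φ TB u \ {DB}) := by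
      have hqDX : q ∈ DX := mem_connectedComponentIn (Or.inl hqI.1)
      rintro (⟨hC, hne⟩ | ⟨hC, hne⟩)
      · exact absurd ((key1 _ hC (fun h => hne (mem_singleton_iff.mpr h))) ▸ ⟨hqDX, hqI.2⟩ :
          q ∈ (∅ : Set X)) (notMem_empty _)
      · exact absurd ((key1B _ hC (fun h => hne (mem_singleton_iff.mpr h))) ▸ ⟨hqDX, hqI.1⟩ :
          q ∈ (∅ : Set X)) (notMem_empty _)
    have hdisj2 : Disjoint (comps φ TA u \ {DA}) (comps φ TB u \ {DB}) := by
      rw [Set.disjoint_iff_inter_eq_empty]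
      apply eq_empty_of_forall_notMem
      rintro C ⟨⟨hCA, hneA⟩, ⟨hCB, hneB⟩⟩
      obtain ⟨z, hz⟩ := comps_nonempty hCA
      exact absurd ((key1 _ hCA (fun h => hneA (mem_singleton_iff.mpr h))) ▸
        ⟨hz, comps_subset hCB hz⟩ : z ∈ (∅ : Set X)) (notMem_empty _)
    have e1 : (comps φ (TA ∪ TB) u).ncard
        = ((comps φ TA u \ {DA}) ∪ (comps φ TB u \ {DB})).ncard + 1 := by
      rw [hdecomp, Set.ncard_insert_of_notMem hDXnotmem (hfA'.union hfB')]
    have e2 : ((comps φ TA u \ {DA}) ∪ (comps φ TB u \ {DB})).ncard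
        = (comps φ TA u \ {DA}).ncard + (comps φ TB u \ {DB}).ncard :=
      Set.ncard_union_eq hdisj2 hfA' hfB'
    have e3 : (comps φ TA u \ {DA}).ncard + 1 = (comps φ TA u).ncard :=
      Set.ncard_diff_singleton_add_one hDAmem hfA
    have e4 : (comps φ TB u \ {DB}).ncard + 1 = (comps φ TB u).ncard :=
      Set.ncard_diff_singleton_add_one hDBmem hfB
    rw [hcompsI, Set.ncard_singleton]
    omega

lemma isPreconnected_sublevel {S : Set X} (hS : IsClosed S) {φ : X → ℝ} (hφ : Continuous φ)
    {v : ℝ} (hsub : ∀ v' > v, (comps φ (S ∩ {x : X | φ x ≤ v'}) v).Subsingleton) :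
    IsPreconnected (S ∩ {x : X | φ x ≤ v}) := by
  set T := S ∩ {x : X | φ x ≤ v} with hT
  rcases T.eq_empty_or_nonempty with hTe | ⟨x, hx⟩
  · rw [hTe]; exact isPreconnected_empty
  have hclosed : ∀ w : ℝ, IsClosed (S ∩ {x : X | φ x ≤ w}) :=
    fun w => hS.inter (isClosed_le hφ continuous_const)
  have hxw : ∀ w : ↥(Ioi v), x ∈ S ∩ {y : X | φ y ≤ (w : ℝ)} :=
    fun w => ⟨hx.1, show φ x ≤ (w : ℝ) from le_trans (hx.2 : φ x ≤ v) (le_of_lt (w.2 : v < (w : ℝ)))⟩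
  set C : ↥(Ioi v) → Set X :=
    fun w => connectedComponentIn (S ∩ {y : X | φ y ≤ (w : ℝ)}) x with hC
  haveI : Nonempty ↥(Ioi v) := ⟨⟨v + 1, by simp⟩⟩
  have hmono : ∀ w w' : ↥(Ioi v), (w : ℝ) ≤ (w' : ℝ) → C w ⊆ C w' := by
    intro w w' hww
    exact connectedComponentIn_mono x
      (inter_subset_inter_right _ (fun z hz => le_trans hz hww))
  have hdir : Directed (· ⊇ ·) C := by
    intro w w'
    refine ⟨⟨min (w : ℝ) (w' : ℝ), (lt_min (w.2 : v < (w : ℝ)) (w'.2 : v < (w' : ℝ)) : v < min (w : ℝ) (w' : ℝ))⟩, ?_, ?_⟩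
    · exact hmono _ _ (min_le_left _ _)
    · exact hmono _ _ (min_le_right _ _)
  have hcomp : ∀ w : ↥(Ioi v), IsCompact (C w) := by
    intro w
    haveI : CompactSpace ↥(S ∩ {y : X | φ y ≤ (w : ℝ)}) :=
      isCompact_iff_compactSpace.mp (hclosed _).isCompact
    rw [hC]
    simp only []
    rw [connectedComponentIn_eq_image (hxw w)]
    exact (isClosed_connectedComponent.isCompact).image continuous_subtype_val
  have hconn : ∀ w, IsPreconnected (C w) := fun w => isPreconnected_connectedComponentIn
  have hne : ∀ w : ↥(Ioi v), (C w).Nonempty := fun w => ⟨x, mem_connectedComponentIn (hxw w)⟩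
  have hTeq : T = ⋂ w, C w := by
    apply Subset.antisymm
    · intro z hz
      apply mem_iInter.mpr
      intro w
      have hz' : z ∈ S ∩ {y : X | φ y ≤ (w : ℝ)} := ⟨hz.1, show φ z ≤ (w : ℝ) from le_trans (hz.2 : φ z ≤ v) (le_of_lt (w.2 : v < (w : ℝ)))⟩
      have h1 : connectedComponentIn (S ∩ {y : X | φ y ≤ (w : ℝ)}) z
          ∈ comps φ (S ∩ {y : X | φ y ≤ (w : ℝ)}) v := ⟨z, hz', hz.2, rfl⟩
      have h2 : connectedComponentIn (S ∩ {y : X | φ y ≤ (w : ℝ)}) x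
          ∈ comps φ (S ∩ {y : X | φ y ≤ (w : ℝ)}) v := ⟨x, hxw w, hx.2, rfl⟩
      have := hsub (w : ℝ) w.2 h1 h2
      show z ∈ connectedComponentIn (S ∩ {y : X | φ y ≤ (w : ℝ)}) x
      rw [← this]
      exact mem_connectedComponentIn hz'
    · intro z hz
      have hz' : ∀ w : ↥(Ioi v), z ∈ S ∩ {y : X | φ y ≤ (w : ℝ)} :=
        fun w => connectedComponentIn_subset _ _ (mem_iInter.mp hz w)
      refine ⟨(hz' ⟨v + 1, by simp⟩).1, ?_⟩
      show φ z ≤ v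
      by_contra h
      push_neg at h
      have := (hz' ⟨(v + φ z) / 2, by simp only [mem_Ioi]; linarith⟩).2
      simp only [mem_setOf_eq] at this
      linarith
  rw [hTeq]
  exact isPreconnected_iInter_directed hdir hcomp hconn hne

end AuxTopology

section H0Lemmas
open Set
variable {X : Type u} [TopologicalSpace X] {K : Type v} [Field K]

lemma H0_eq_zero_of_empty (C : CechTheory X K) {T : Set X} (hT : T = ∅) :
    ∀ z : C.H0 T, z = 0 := by
  subst hT
  intro z
  have hsp := C.cls_span ∅ isCompact_empty
  have : IsEmpty ↥(∅ : Set X) := by simp [isEmpty_subtype]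
  rw [Set.range_eq_empty, Submodule.span_empty] at hsp
  have : z ∈ (⊥ : Submodule K (C.H0 ∅)) := hsp ▸ Submodule.mem_top
  exact (Submodule.mem_bot K).mp this

lemma cls_ne_zero (C : CechTheory X K) {T : Set X} (hTc : IsCompact T) (p : ↥T) :
    C.cls T p ≠ 0 := by
  set f : ConnectedComponents ↥T → ↥T :=
    Function.surjInv ConnectedComponents.surjective_coe with hf
  have hsec : ∀ c, ConnectedComponents.mk (f c) = c :=
    fun c => Function.surjInv_eq ConnectedComponents.surjective_coe c
  have hli := C.cls_indep T hTc f hsec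
  have h1 : C.cls T (f (ConnectedComponents.mk p)) ≠ 0 :=
    hli.ne_zero (ConnectedComponents.mk p)
  have h2 : C.cls T (f (ConnectedComponents.mk p)) = C.cls T p := by
    rw [C.cls_eq_iff T hTc]
    exact ConnectedComponents.coe_eq_coe.mp (hsec (ConnectedComponents.mk p))
  rwa [h2] at h1

lemma H0_exists_smul (C : CechTheory X K) {T : Set X} (hTc : IsCompact T)
    (hTp : IsPreconnected T) {x0 : X} (hx0 : x0 ∈ T) (z : C.H0 T) :
    ∃ a : K, z = a • C.cls T ⟨x0, hx0⟩ := by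
  haveI : ConnectedSpace ↥T :=
    isConnected_iff_connectedSpace.mp ⟨⟨x0, hx0⟩, hTp⟩
  have hall : ∀ y : ↥T, C.cls T y = C.cls T ⟨x0, hx0⟩ := by
    intro y
    rw [C.cls_eq_iff T hTc]
    rw [PreconnectedSpace.connectedComponent_eq_univ, PreconnectedSpace.connectedComponent_eq_univ]
  have hrange : Set.range (C.cls T) ⊆ {C.cls T ⟨x0, hx0⟩} := by
    rintro - ⟨y, rfl⟩
    exact hall y
  have hz : z ∈ Submodule.span K {C.cls T ⟨x0, hx0⟩} := by
    have := C.cls_span T hTc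
    have h2 : Submodule.span K (Set.range (C.cls T))
        ≤ Submodule.span K {C.cls T ⟨x0, hx0⟩} := Submodule.span_mono hrange
    exact h2 (this ▸ Submodule.mem_top)
  obtain ⟨a, ha⟩ := Submodule.mem_span_singleton.mp hz
  exact ⟨a, ha.symm⟩

end H0Lemmas

/-- Theorem 4.11: for `X = A ∪ B` with the standing hypotheses and
`u < v`, if `ℓ_{(A∩B)}(u, v') = ℓ_{(A∩B)}(v, v') ≤ 1` for every `v' > v`, then both
`ker α_v = 0` and `ker α_{v,u} = 0`; in particular the Mayer–Vietoris equality
`ℓ_{(X,φ)}(u,v) = ℓ_{(A,φ|A)}(u,v) + ℓ_{(B,φ|B)}(u,v) − ℓ_{(A∩B,φ|A∩B)}(u,v)` holds. -/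
theorem alpha_injective_of_sizeFun_inter {X : Type u} [TopologicalSpace X]
    [CompactSpace X] [T2Space X] [LocallyConnectedSpace X] [Nonempty X] {K : Type v}
    [Field K] (C : CechTheory X K) {A B : Set X} (hA : IsClosed A) (hB : IsClosed B)
    (hUnion : A ∪ B = Set.univ) (hInt : interior A ∪ interior B = Set.univ)
    [LocallyConnectedSpace ↥A] [LocallyConnectedSpace ↥B]
    [LocallyConnectedSpace ↥(A ∩ B)]
    {φ : X → ℝ} (hφ : Continuous φ) {u v : ℝ} (huv : u < v)
    (hsz : ∀ v' > v, sizeFunOn (A ∩ B) φ u v' = sizeFunOn (A ∩ B) φ v v' ∧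
      sizeFunOn (A ∩ B) φ v v' ≤ 1) :
    LinearMap.ker (C.alphaAbs φ A B v) = ⊥ ∧
    LinearMap.ker (C.alphaRel φ A B u v) = ⊥ ∧
    (sizeFunOn Set.univ φ u v : ℤ) =
      (sizeFunOn A φ u v : ℤ) + (sizeFunOn B φ u v : ℤ)
        - (sizeFunOn (A ∩ B) φ u v : ℤ) := by
  
  classical
  have hlev : ∀ w : ℝ, IsClosed {x : X | φ x ≤ w} := fun w => isClosed_le hφ continuous_const
  have hclI : IsClosed (A ∩ B) := hA.inter hB
  haveI hcsA : CompactSpace ↥A := isCompact_iff_compactSpace.mp hA.isCompact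
  haveI hcsB : CompactSpace ↥B := isCompact_iff_compactSpace.mp hB.isCompact
  haveI hcsI : CompactSpace ↥(A ∩ B) := isCompact_iff_compactSpace.mp hclI.isCompact
  have hfinA : ∀ {w v' : ℝ}, w < v' → (comps φ (A ∩ {x : X | φ x ≤ v'}) w).Finite := by
    intro w v' hwv
    rw [comps_inter_eq_image]
    exact (comps_finite (hφ.comp continuous_subtype_val) hwv).image _
  have hfinB : ∀ {w v' : ℝ}, w < v' → (comps φ (B ∩ {x : X | φ x ≤ v'}) w).Finite := by
    intro w v' hwv
    rw [comps_inter_eq_image]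
    exact (comps_finite (hφ.comp continuous_subtype_val) hwv).image _
  have hfinI : ∀ {w v' : ℝ}, w < v' → (comps φ ((A ∩ B) ∩ {x : X | φ x ≤ v'}) w).Finite := by
    intro w v' hwv
    rw [comps_inter_eq_image]
    exact (comps_finite (hφ.comp continuous_subtype_val) hwv).image _
  have hfinX : ∀ {w v' : ℝ}, w < v' → (comps φ {x : X | φ x ≤ v'} w).Finite :=
    fun hwv => comps_finite hφ hwv
  -- Step A: the sublevel set of the intersection at level v is preconnected
  have hsubI : ∀ v' > v, ((comps φ ((A ∩ B) ∩ {x : X | φ x ≤ v'}) v)).Subsingleton := by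
    intro v' hv'
    have h1 := (hsz v' hv').2
    rw [sizeFunOn_eq_comps] at h1
    intro C hC D hD
    exact (Set.ncard_le_one (hfinI hv')).mp h1 C hC D hD
  have hpre : IsPreconnected ((A ∩ B) ∩ {x : X | φ x ≤ v}) :=
    isPreconnected_sublevel hclI hφ hsubI
  -- nonemptiness at level u
  have hneu : ((A ∩ B) ∩ {x : X | φ x ≤ v}).Nonempty →
      ((A ∩ B) ∩ {x : X | φ x ≤ u}).Nonempty := by
    rintro ⟨x, hx⟩
    have h1 := (hsz (v + 1) (by linarith)).1
    have hmem : connectedComponentIn ((A ∩ B) ∩ {x : X | φ x ≤ v + 1}) x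
        ∈ comps φ ((A ∩ B) ∩ {x : X | φ x ≤ v + 1}) v :=
      ⟨x, ⟨hx.1, by have := hx.2; simp only [Set.mem_setOf_eq] at this ⊢; linarith⟩, hx.2, rfl⟩
    have hpos : 0 < sizeFunOn (A ∩ B) φ v (v + 1) := by
      rw [sizeFunOn_eq_comps]
      exact (Set.ncard_pos (hfinI (by linarith))).mpr ⟨_, hmem⟩
    rw [← h1, sizeFunOn_eq_comps] at hpos
    obtain ⟨C, p, hp, hpu, -⟩ := (Set.ncard_pos (hfinI (show u < v + 1 by linarith))).mp hpos
    exact ⟨p, hp.1, hpu⟩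
  have hcIv : IsCompact ((A ∩ B) ∩ {x : X | φ x ≤ v}) := (hclI.inter (hlev v)).isCompact
  have hcAv : IsCompact (A ∩ {x : X | φ x ≤ v}) := (hA.inter (hlev v)).isCompact
  refine ⟨?_, ?_, ?_⟩
  · -- ker α_v = ⊥
    rw [LinearMap.ker_eq_bot']
    intro z hz
    rcases Set.eq_empty_or_nonempty ((A ∩ B) ∩ {x : X | φ x ≤ v}) with hTe | ⟨x0, hx0⟩
    · exact H0_eq_zero_of_empty C hTe z
    · obtain ⟨a, rfl⟩ := H0_exists_smul C hcIv hpre hx0 z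
      have hfst := congrArg Prod.fst hz
      rw [CechTheory.alphaAbs, LinearMap.prod_apply] at hfst
      simp only [Function.prod, Prod.fst_zero] at hfst
      rw [map_smul, C.map_cls] at hfst
      rcases smul_eq_zero.mp hfst with ha | hcls
      · rw [ha, zero_smul]
      · exact absurd hcls (cls_ne_zero C hcAv _)
  · -- ker α_{v,u} = ⊥
    have hsubset : (A ∩ B) ∩ {x : X | φ x ≤ u} ⊆ (A ∩ B) ∩ {x : X | φ x ≤ v} :=
      Set.inter_subset_inter_right _ (fun z hz => le_trans hz (le_of_lt huv))
    have hsurj : Function.Surjective (C.map hsubset) := by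
      intro z
      rcases Set.eq_empty_or_nonempty ((A ∩ B) ∩ {x : X | φ x ≤ v}) with hTe | ⟨x1, hx1⟩
      · exact ⟨0, by rw [map_zero]; exact (H0_eq_zero_of_empty C hTe z).symm⟩
      · obtain ⟨q, hq⟩ := hneu ⟨x1, hx1⟩
        obtain ⟨a, rfl⟩ := H0_exists_smul C hcIv hpre (hsubset hq) z
        refine ⟨a • C.cls _ ⟨q, hq⟩, ?_⟩
        rw [map_smul, C.map_cls]
    have hker : LinearMap.ker
        (C.quot ((A ∩ B) ∩ {x : X | φ x ≤ v}) ((A ∩ B) ∩ {x : X | φ x ≤ u})) = ⊤ := by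
      rw [← C.exact_pair hsubset]
      exact LinearMap.range_eq_top.mpr hsurj
    have hzero : ∀ y : C.H0rel ((A ∩ B) ∩ {x : X | φ x ≤ v})
        ((A ∩ B) ∩ {x : X | φ x ≤ u}), y = 0 := by
      intro y
      obtain ⟨z, rfl⟩ := C.quot_surjective _ _ hsubset y
      exact LinearMap.mem_ker.mp (by rw [hker]; exact Submodule.mem_top)
    exact (Submodule.eq_bot_iff _).mpr (fun y _ => hzero y)
  · -- the Mayer–Vietoris counting identity
    have hLv : {x : X | φ x ≤ v} = (A ∩ {x : X | φ x ≤ v}) ∪ (B ∩ {x : X | φ x ≤ v}) := by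
      rw [← Set.union_inter_distrib_right, hUnion, Set.univ_inter]
    have hIv : (A ∩ B) ∩ {x : X | φ x ≤ v}
        = (A ∩ {x : X | φ x ≤ v}) ∩ (B ∩ {x : X | φ x ≤ v}) :=
      Set.inter_inter_distrib_right A B _
    have hq : ((A ∩ {x : X | φ x ≤ v}) ∩ (B ∩ {x : X | φ x ≤ v})).Nonempty →
        ∃ q ∈ (A ∩ {x : X | φ x ≤ v}) ∩ (B ∩ {x : X | φ x ≤ v}), φ q ≤ u := by
      intro h
      rw [← hIv] at h
      obtain ⟨q, hq1, hq2⟩ := hneu h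
      have hqv : φ q ≤ v := le_trans hq2 (le_of_lt huv)
      exact ⟨q, ⟨⟨hq1.1, hqv⟩, ⟨hq1.2, hqv⟩⟩, hq2⟩
    have hcount := comps_count (φ := φ) (hA.inter (hlev v)) (hB.inter (hlev v))
      (hIv ▸ hpre) hq (hfinA huv) (hfinB huv)
    rw [sizeFunOn_eq_comps, sizeFunOn_eq_comps, sizeFunOn_eq_comps, sizeFunOn_eq_comps,
      Set.univ_inter]
    rw [← hLv, ← hIv] at hcount
    omega
end
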